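/- arXiv:2111.04662 — 4 statements merged into one kernel-verified Lean document; each statement's English description precedes it below -/
import Mathlib

section
/- Let φ : C → X be a covering map, x₀ ∈ X, E a set with a left action of Γ = π₁(X, x₀), Ψ₀ : E → φ⁻¹(x₀) a Γ-covariant bijection, and let Ψ be the trivialization determined by Ψ₀. Then for any point x ∈ X, any two paths λ₁, λ₂ in X from x to x₀, and any e₁, e₂ ∈ E, one has Ψ_{λ₁}(e₁) = Ψ_{λ₂}(e₂) if and only if e₁ = [λ₁⁻¹λ₂]·e₂. -/
open unitInterval

/-- The path-homotopy class of a loop, as an element of the fundamental group. -/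
noncomputable def loopClass {X : Type*} [TopologicalSpace X] {x : X} (μ : Path x x) :
    FundamentalGroup X x :=
  (show FundamentalGroupoid.mk x ⟶ FundamentalGroupoid.mk x from
    Quotient.mk (Path.Homotopic.setoid x x) μ)

/-- `Ψ₀ : E → C` is `Γ`-covariant (with respect to a covering map `φ : C → X`, a basepoint
`x₀` and an action of `π₁(X, x₀)` on `E`) if for every loop `μ` based at `x₀` and every
`e ∈ E`, any lift of `μ` to `C` ending at `Ψ₀ e` starts at `Ψ₀ ([μ] • e)`. -/
def GammaCovariant {C X : Type} [TopologicalSpace C] [TopologicalSpace X]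
    (φ : C → X) (x₀ : X) {E : Type} [MulAction (FundamentalGroup X x₀) E]
    (Ψ₀ : E → C) : Prop :=
  ∀ (μ : Path x₀ x₀) (e : E) (γ' : C(unitInterval, C)),
    (∀ t, φ (γ' t) = μ t) → γ' 1 = Ψ₀ e → γ' 0 = Ψ₀ (loopClass μ • e)

/-- `Ψ` is the trivialization of `φ` determined by `Ψ₀`: for each `x : X`, each path `l`
from `x` to `x₀` and each `e`, `Ψ x l e` is the initial point of the (unique) lift of `l`
ending at `Ψ₀ e`; we encode this by requiring that any lift of `l` ending at `Ψ₀ e` starts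
at `Ψ x l e`. -/
def IsTrivializationOf {C X : Type} [TopologicalSpace C] [TopologicalSpace X]
    (φ : C → X) (x₀ : X) {E : Type} (Ψ₀ : E → C)
    (Ψ : ∀ x : X, Path x x₀ → E → C) : Prop :=
  ∀ (x : X) (l : Path x x₀) (e : E) (γ' : C(unitInterval, C)),
    (∀ t, φ (γ' t) = l t) → γ' 1 = Ψ₀ e → γ' 0 = Ψ x l e

namespace CoverLift

variable {C X : Type} [TopologicalSpace C] [TopologicalSpace X] {φ : C → X}


variable {C X : Type} [TopologicalSpace C] [TopologicalSpace X] {φ : C → X}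

/-- `good φ γ c t` : there is a partial lift of `γ` starting at `c`, valid up to time `t`. -/
def good (φ : C → X) (γ : C(unitInterval, X)) (c : C) (t : unitInterval) : Prop :=
  ∃ g : C(unitInterval, C), g 0 = c ∧ ∀ r ≤ t, φ (g r) = γ r

lemma good_mono {γ : C(unitInterval, X)} {c : C} {s t : unitInterval} (h : good φ γ c t)
    (hst : s ≤ t) : good φ γ c s := by
  obtain ⟨g, hg0, hg⟩ := h
  exact ⟨g, hg0, fun r hr => hg r (hr.trans hst)⟩

lemma good_step {γ : C(unitInterval, X)} {c : C} {s u : unitInterval} (hsu : s ≤ u)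
    {F : Type} [TopologicalSpace F] (T : Bundle.Trivialization F φ)
    (hmaps : ∀ r, s ≤ r → r ≤ u → γ r ∈ T.baseSet)
    (hs : good φ γ c s) : good φ γ c u := by
  obtain ⟨g, hg0, hg⟩ := hs
  have hgs : φ (g s) = γ s := hg s le_rfl
  have hbs : γ s ∈ T.baseSet := hmaps s le_rfl hsu
  have hsrc : g s ∈ T.source := T.mem_source.2 (by rw [hgs]; exact hbs)
  set i := (T (g s)).2 with hi
  have clamp_cont : Continuous fun r : unitInterval => min (max r s) u :=
    (continuous_id.max continuous_const).min continuous_const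
  have clamp_mem : ∀ r : unitInterval, γ (min (max r s) u) ∈ T.baseSet := by
    intro r
    exact hmaps _ (le_min (le_max_right r s) hsu) (min_le_right _ _)
  set h : unitInterval → C := fun r => T.toOpenPartialHomeomorph.symm (γ (min (max r s) u), i)
    with hh
  have h_cont : Continuous h := by
    apply T.toOpenPartialHomeomorph.continuousOn_symm.comp_continuous
      ((γ.continuous.comp clamp_cont).prodMk continuous_const)
    intro r
    exact T.mem_target.2 (clamp_mem r)
  have h_eq_s : h s = g s := by
    have hmin : min (max s s) u = s := by
      rw [max_self]; exact min_eq_left hsu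
    have hT : (γ s, i) = T (g s) := by
      refine Prod.ext ?_ rfl
      rw [T.coe_fst hsrc, hgs]
    rw [hh]; simp only [hmin, hT]
    exact T.toOpenPartialHomeomorph.left_inv hsrc
  set g' : unitInterval → C := fun r => if r ≤ s then g r else h r with hg'
  have g'_cont : Continuous g' := by
    refine Continuous.if_le g.continuous h_cont continuous_id continuous_const ?_
    intro r hr
    rw [hr, h_eq_s]
  refine ⟨⟨g', g'_cont⟩, ?_, ?_⟩
  · show g' 0 = c
    have h0s : (0 : unitInterval) ≤ s := Subtype.coe_le_coe.1 s.2.1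
    rw [hg']; simp only [if_pos h0s]; exact hg0
  · intro r hr
    show φ (g' r) = γ r
    rw [hg']
    by_cases hrs : r ≤ s
    · simp only [if_pos hrs]; exact hg r hrs
    · simp only [if_neg hrs]
      push_neg at hrs
      have hmin : min (max r s) u = r := by
        rw [max_eq_left hrs.le]; exact min_eq_left hr
      rw [hh]
      simp only [hmin]
      exact T.proj_symm_apply' (hmaps r hrs.le hr)

/-- Path lifting for covering maps. -/
lemma exists_lift (hφ : IsCoveringMap φ) (γ : C(unitInterval, X)) (c : C) (hc : φ c = γ 0) :
    ∃ g : C(unitInterval, C), g 0 = c ∧ ∀ t, φ (g t) = γ t := by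
  set S : Set unitInterval := {t | good φ γ c t} with hS
  have h0 : (0 : unitInterval) ∈ S := by
    refine ⟨⟨fun _ => c, continuous_const⟩, rfl, fun r hr => ?_⟩
    have : r = 0 := le_antisymm hr r.2.1
    rw [this]; exact hc
  -- an ε-neighborhood fact around any point
  have key : ∀ t : unitInterval, ∃ ε > 0, ∀ s u : unitInterval, s ≤ u →
      (∀ r : unitInterval, s ≤ r → r ≤ u → dist r t < ε) → good φ γ c s → good φ γ c u := by
    intro t
    have hev := hφ (γ t)
    by_cases hne : Nonempty (φ ⁻¹' {γ t})
    swap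
    · obtain ⟨_, U, hxU, hU, -, H, -⟩ := hev
      have hV : γ ⁻¹' U ∈ nhds t :=
        γ.continuous.continuousAt.preimage_mem_nhds (hU.mem_nhds hxU)
      obtain ⟨ε, hε, hball⟩ := Metric.mem_nhds_iff.1 hV
      refine ⟨ε, hε, fun s u hsu hclose hgood => ?_⟩
      obtain ⟨g, -, hg⟩ := hgood
      have hs : γ s ∈ U := hball (by rw [Metric.mem_ball]; exact hclose s le_rfl hsu)
      exact (hne ⟨(H ⟨g s, by rw [Set.mem_preimage, hg s le_rfl]; exact hs⟩).2⟩).elim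
    let T := hev.toTrivialization
    have hT : γ t ∈ T.baseSet := hev.mem_toTrivialization_baseSet
    have hV : γ ⁻¹' T.baseSet ∈ nhds t :=
      γ.continuous.continuousAt.preimage_mem_nhds (T.open_baseSet.mem_nhds hT)
    obtain ⟨ε, hε, hball⟩ := Metric.mem_nhds_iff.1 hV
    refine ⟨ε, hε, fun s u hsu hclose hgood => ?_⟩
    refine good_step hsu T (fun r hr hru => ?_) hgood
    exact hball (by rw [Metric.mem_ball]; exact hclose r hr hru)
  have hopen : IsOpen S := by
    rw [Metric.isOpen_iff]
    intro t ht
    obtain ⟨ε, hε, hstep⟩ := key t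
    refine ⟨ε, hε, fun u hu => ?_⟩
    rcases le_total u t with h | h
    · exact good_mono ht h
    · refine hstep t u h (fun r hr hru => ?_) ht
      rw [Subtype.dist_eq, Real.dist_eq, abs_sub_lt_iff]
      rw [Metric.mem_ball, Subtype.dist_eq, Real.dist_eq, abs_sub_lt_iff] at hu
      constructor
      · calc (r : ℝ) - t ≤ (u : ℝ) - t := by
              have := Subtype.coe_le_coe.2 hru; linarith
          _ < ε := hu.1
      · have := Subtype.coe_le_coe.2 hr; linarith
  have hclosed : IsClosed S := by
    rw [← closure_eq_iff_isClosed]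
    refine Set.Subset.antisymm (fun t ht => ?_) subset_closure
    obtain ⟨ε, hε, hstep⟩ := key t
    obtain ⟨s, hsS, hst⟩ := Metric.mem_closure_iff.1 ht ε hε
    rcases le_total t s with h | h
    · exact good_mono hsS h
    · refine hstep s t h (fun r hr hrt => ?_) hsS
      rw [Subtype.dist_eq, Real.dist_eq, abs_sub_lt_iff]
      rw [Subtype.dist_eq, Real.dist_eq, abs_sub_lt_iff] at hst
      constructor
      · have := Subtype.coe_le_coe.2 hrt; linarith
      · calc (t : ℝ) - r ≤ (t : ℝ) - s := by
              have := Subtype.coe_le_coe.2 hr; linarith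
          _ < ε := hst.1
  have : S = Set.univ := (isClopen_iff.1 ⟨hclosed, hopen⟩).resolve_left
    (Set.nonempty_iff_ne_empty.1 ⟨0, h0⟩)
  have h1 : (1 : unitInterval) ∈ S := this.symm ▸ Set.mem_univ _
  obtain ⟨g, hg0, hg⟩ := h1
  exact ⟨g, hg0, fun t => hg t (Subtype.coe_le_coe.1 t.2.2)⟩


/-- Lifts ending at a prescribed point exist. -/
lemma exists_lift_end (hφ : IsCoveringMap φ) {x y : X} (l : Path x y) (c' : C)
    (hc : φ c' = y) : ∃ q : C(unitInterval, C), (∀ t, φ (q t) = l t) ∧ q 1 = c' := by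
  obtain ⟨p, hp0, hp⟩ := exists_lift hφ l.symm.toContinuousMap c'
    (by rw [hc]; exact (l.symm.source).symm)
  refine ⟨p.comp ⟨σ, continuous_symm⟩, fun t => ?_, ?_⟩
  · have := hp (σ t)
    simp only [ContinuousMap.comp_apply, ContinuousMap.coe_mk]
    rw [this]
    show l.symm (σ t) = l t
    rw [Path.symm_apply]
    simp [symm_symm]
  · show p (σ 1) = c'
    rw [symm_one, hp0]


end CoverLift

open CoverLift in
/-- Let `φ : C → X` be a covering map, `x₀ ∈ X`, `E` a set with a left action
of `Γ = π₁(X, x₀)`, `Ψ₀ : E → φ⁻¹(x₀)` a `Γ`-covariant bijection, and `Ψ` the trivialization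
determined by `Ψ₀`. Then for any `x ∈ X`, any two paths `λ₁, λ₂` from `x` to `x₀` and any
`e₁, e₂ ∈ E`, one has `Ψ_{λ₁}(e₁) = Ψ_{λ₂}(e₂)` iff `e₁ = [λ₁⁻¹λ₂] • e₂`. -/

theorem trivialization_eq_iff
    {C X : Type} [TopologicalSpace C] [TopologicalSpace X]
    (φ : C → X) (hφ : IsCoveringMap φ) (x₀ : X)
    (E : Type) [MulAction (FundamentalGroup X x₀) E]
    (Ψ₀ : E → C) (hfib : ∀ e, φ (Ψ₀ e) = x₀) (hinj : Function.Injective Ψ₀)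
    (hsurj : ∀ c : C, φ c = x₀ → ∃ e, Ψ₀ e = c)
    (hcov : GammaCovariant φ x₀ Ψ₀)
    (Ψ : ∀ x : X, Path x x₀ → E → C) (hΨ : IsTrivializationOf φ x₀ Ψ₀ Ψ) :
    ∀ (x : X) (l₁ l₂ : Path x x₀) (e₁ e₂ : E),
      Ψ x l₁ e₁ = Ψ x l₂ e₂ ↔ e₁ = loopClass (l₁.symm.trans l₂) • e₂ := by
  intro x l₁ l₂ e₁ e₂
  obtain ⟨q₂, hq₂, hq₂1⟩ := exists_lift_end hφ l₂ (Ψ₀ e₂) (hfib e₂)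
  have hc2 : q₂ 0 = Ψ x l₂ e₂ := hΨ x l₂ e₂ q₂ hq₂ hq₂1
  have hφc : φ (q₂ 0) = l₁.toContinuousMap 0 := by
    rw [hq₂ 0]
    show l₂ 0 = l₁ 0
    rw [l₂.source, l₁.source]
  obtain ⟨p₁, hp₁0, hp₁⟩ := exists_lift hφ l₁.toContinuousMap (q₂ 0) hφc
  set P₁ : Path (q₂ 0) (p₁ 1) := ⟨p₁, hp₁0, rfl⟩ with hP₁
  set Q₂ : Path (q₂ 0) (Ψ₀ e₂) := ⟨q₂, rfl, hq₂1⟩ with hQ₂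
  set χ : Path (p₁ 1) (Ψ₀ e₂) := P₁.symm.trans Q₂ with hχdef
  have hχ : ∀ t, φ (χ.toContinuousMap t) = (l₁.symm.trans l₂) t := by
    intro t
    show φ (χ t) = (l₁.symm.trans l₂) t
    rw [hχdef, Path.trans_apply, Path.trans_apply]
    split_ifs with h
    · rw [Path.symm_apply, Path.symm_apply]
      exact hp₁ _
    · exact hq₂ _
  have hp₁1 : p₁ 1 = Ψ₀ (loopClass (l₁.symm.trans l₂) • e₂) := by
    have := hcov (l₁.symm.trans l₂) e₂ χ.toContinuousMap hχ χ.target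
    rw [← χ.source]; exact this
  have hkey : Ψ x l₁ (loopClass (l₁.symm.trans l₂) • e₂) = Ψ x l₂ e₂ := by
    rw [← hc2, ← (hΨ x l₁ _ p₁ hp₁ hp₁1), hp₁0]
  have hΨinj : Function.Injective (Ψ x l₁) := by
    intro a b hab
    obtain ⟨ra, hra, hra1⟩ := exists_lift_end hφ l₁ (Ψ₀ a) (hfib a)
    obtain ⟨rb, hrb, hrb1⟩ := exists_lift_end hφ l₁ (Ψ₀ b) (hfib b)
    have ha0 : ra 0 = Ψ x l₁ a := hΨ x l₁ a ra hra hra1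
    have hb0 : rb 0 = Ψ x l₁ b := hΨ x l₁ b rb hrb hrb1
    have heq : (ra : unitInterval → C) = rb :=
      hφ.eq_of_comp_eq ra.continuous rb.continuous
        (funext fun t => (hra t).trans (hrb t).symm) 0
        (by rw [ha0, hb0, hab])
    apply hinj
    rw [← hra1, ← hrb1]
    exact congrFun heq 1
  constructor
  · intro h
    rw [← hkey] at h
    exact hΨinj h
  · intro h
    rw [h, hkey]
end

section
/- Let X be a path-connected, locally path-connected topological space, x₀ ∈ X, and E a finite set with a left action of Γ = π₁(X, x₀). Let φ : C → X and φ' : C' → X be covering maps, and let Ψ₀ : E → φ⁻¹(x₀) and Ψ₀' : E → (φ')⁻¹(x₀) be Γ-covariant bijections. Then there exists a unique continuous map F : C → C' satisfying φ' ∘ F = φ and F ∘ Ψ₀ = Ψ₀'; this F is a homeomorphism; and for every point x ∈ X, every path λ in X from x to x₀, and every e ∈ E, one has F(Ψ_λ(e)) = Ψ'_λ(e), where Ψ and Ψ' are the trivializations determined by Ψ₀ and Ψ₀' respectively. -/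
open unitInterval

section Lift
variable {C X : Type} [TopologicalSpace C] [TopologicalSpace X] {φ : C → X}

private lemma dist_le_left {a b u : I} (h1 : a ≤ u) (h2 : u ≤ b) : dist u a ≤ dist b a := by
  rw [Subtype.dist_eq, Subtype.dist_eq, Real.dist_eq, Real.dist_eq]
  have h1' : (a : ℝ) ≤ u := h1
  have h2' : (u : ℝ) ≤ b := h2
  rw [abs_of_nonneg (by linarith), abs_of_nonneg (by linarith)]
  linarith

private lemma dist_le_right {a b u : I} (h1 : a ≤ u) (h2 : u ≤ b) : dist u b ≤ dist a b := by
  rw [Subtype.dist_eq, Subtype.dist_eq, Real.dist_eq, Real.dist_eq]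
  have h1' : (a : ℝ) ≤ u := h1
  have h2' : (u : ℝ) ≤ b := h2
  rw [abs_of_nonpos (by linarith), abs_of_nonpos (by linarith)]
  linarith

private lemma lift_extend {F : Type*} [TopologicalSpace F] (e : Bundle.Trivialization F φ)
    (γ : C(I, X)) {t s : I} (hts : t ≤ s) (Γ : C(I, C)) (hΓ : ∀ u, φ (Γ u) = γ (min u t))
    (hsub : ∀ u : I, t ≤ u → u ≤ s → γ u ∈ e.baseSet) :
    ∃ Γ' : C(I, C), Γ' 0 = Γ 0 ∧ ∀ u, φ (Γ' u) = γ (min u s) := by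
  have hΓt : φ (Γ t) = γ t := by rw [hΓ, min_self]
  have hmemt : Γ t ∈ e.source := e.mem_source.2 (hΓt ▸ hsub t le_rfl hts)
  set pt : F := (e (Γ t)).2 with hpt
  have hmem : ∀ u : I, γ (min (max u t) s) ∈ e.baseSet := fun u =>
    hsub _ (le_min (le_max_right u t) hts) (min_le_right _ _)
  set g : I → C := fun u => e.toOpenPartialHomeomorph.symm (γ (min (max u t) s), pt) with hg
  have hgc : Continuous g := by
    apply e.toOpenPartialHomeomorph.continuousOn_symm.comp_continuous
    · exact (γ.continuous.comp ((continuous_id.max continuous_const).min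
        continuous_const)).prodMk continuous_const
    · intro u
      rw [e.target_eq]
      exact ⟨hmem u, trivial⟩
  have hgt : g t = Γ t := by
    have h1 : min (max t t) s = t := by rw [max_self, min_eq_left hts]
    show e.toOpenPartialHomeomorph.symm (γ (min (max t t) s), pt) = Γ t
    rw [h1, ← hΓt]
    exact e.symm_apply_mk_proj hmemt
  refine ⟨⟨fun u => if u ≤ t then Γ u else g u, ?_⟩, ?_, fun u => ?_⟩
  · exact Continuous.if_le Γ.continuous hgc continuous_id continuous_const
      (fun u hu => by rw [show u = t from hu, hgt])
  · show (if (0:I) ≤ t then Γ 0 else g 0) = Γ 0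
    rw [if_pos nonneg']
  · show φ (if u ≤ t then Γ u else g u) = γ (min u s)
    split_ifs with h
    · rw [hΓ u, min_eq_left h, min_eq_left (h.trans hts)]
    · have htu : t ≤ u := (not_le.1 h).le
      show φ (e.toOpenPartialHomeomorph.symm (γ (min (max u t) s), pt)) = γ (min u s)
      rw [e.proj_symm_apply (e.mem_target.2 (hmem u)), max_eq_left htu]

theorem IsCoveringMap.pathLift (hφ : IsCoveringMap φ) (γ : C(I, X)) (c : C) (hc : φ c = γ 0) :
    ∃ Γ : C(I, C), Γ 0 = c ∧ ∀ t, φ (Γ t) = γ t := by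
  obtain ⟨Γ, hΓ, hΓ0⟩ := hφ.exists_path_lifts γ c hc.symm
  exact ⟨Γ, hΓ0, fun t => congrFun hΓ t⟩

theorem IsCoveringMap.pathLiftEnd (hφ : IsCoveringMap φ) (γ : C(I, X)) (c : C)
    (hc : φ c = γ 1) : ∃ Γ : C(I, C), Γ 1 = c ∧ ∀ t, φ (Γ t) = γ t := by
  obtain ⟨Δ, hΔ0, hΔ⟩ := hφ.pathLift (γ.comp ⟨σ, continuous_symm⟩) c (by simpa using hc)
  refine ⟨Δ.comp ⟨σ, continuous_symm⟩, by simpa using hΔ0, fun t => ?_⟩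
  simpa using hΔ (σ t)

lemma lift_trans {x y z : X} {a b c' : C} {p : Path a b} {q : Path b c'} {l : Path x y}
    {m : Path y z} (hp : ∀ t, φ (p t) = l t) (hq : ∀ t, φ (q t) = m t) :
    ∀ t, φ ((p.trans q) t) = (l.trans m) t := by
  intro t
  rw [Path.trans_apply, Path.trans_apply]
  split_ifs with h
  · exact hp _
  · exact hq _

lemma lift_symm {x y : X} {a b : C} {p : Path a b} {l : Path x y}
    (hp : ∀ t, φ (p t) = l t) : ∀ t, φ (p.symm t) = l.symm t := by
  intro t
  exact hp (σ t)

end Lift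

section Main
variable {X : Type} [TopologicalSpace X] [PathConnectedSpace X]
  {x₀ : X} {E : Type} [MulAction (FundamentalGroup X x₀) E]
  {C : Type} [TopologicalSpace C] {φ : C → X}
  {C' : Type} [TopologicalSpace C'] {φ' : C' → X}

lemma exists_main (hφ : IsCoveringMap φ) (hφ' : IsCoveringMap φ')
    (Ψ₀ : E → C) (hinj : Function.Injective Ψ₀)
    (hsurj : ∀ c : C, φ c = x₀ → ∃ e, Ψ₀ e = c)
    (hcov : GammaCovariant φ x₀ Ψ₀)
    (Ψ₀' : E → C') (hfib' : ∀ e, φ' (Ψ₀' e) = x₀)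
    (hcov' : GammaCovariant φ' x₀ Ψ₀')
    (Ψ' : ∀ x : X, Path x x₀ → E → C') (hΨ' : IsTrivializationOf φ' x₀ Ψ₀' Ψ') :
    ∃ F : C → C', ∀ (x : X) (l : Path x x₀) (e : E) (Γ : C(I, C)),
      (∀ t, φ (Γ t) = l t) → Γ 1 = Ψ₀ e → F (Γ 0) = Ψ' x l e := by
  have hch : ∀ c : C, ∃ (e : E) (Γ : C(I, C)), Γ 0 = c ∧
      (∀ t, φ (Γ t) = (PathConnectedSpace.somePath (φ c) x₀) t) ∧ Γ 1 = Ψ₀ e := by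
    intro c
    obtain ⟨Γ, hΓ0, hΓ⟩ := hφ.pathLift (PathConnectedSpace.somePath (φ c) x₀).toContinuousMap
      c (by simp)
    obtain ⟨e, he⟩ := hsurj (Γ 1) (by rw [hΓ 1]; simp)
    exact ⟨e, Γ, hΓ0, hΓ, he.symm⟩
  refine ⟨fun c => Ψ' (φ c) (PathConnectedSpace.somePath (φ c) x₀) (hch c).choose,
    fun x l e Γ hΓφ hΓ1 => ?_⟩
  have hx : x = φ (Γ 0) := by rw [hΓφ 0, l.source]
  subst hx
  obtain ⟨Δ, hΔ0, hΔφ, hΔ1⟩ := (hch (Γ 0)).choose_spec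
  set e₀ := (hch (Γ 0)).choose with he₀def
  set lc := PathConnectedSpace.somePath (φ (Γ 0)) x₀ with hlc
  -- the loop μ and its lift in C
  set μ : Path x₀ x₀ := l.symm.trans lc with hμ
  set ΓP : Path (Γ 0) (Ψ₀ e) := ⟨Γ, rfl, hΓ1⟩ with hΓP
  set ΔP : Path (Γ 0) (Ψ₀ e₀) := ⟨Δ, hΔ0, hΔ1⟩ with hΔP
  have hM : ∀ t, φ ((ΓP.symm.trans ΔP) t) = μ t :=
    lift_trans (lift_symm (fun t => hΓφ t)) (fun t => hΔφ t)
  have he : e = loopClass μ • e₀ := by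
    apply hinj
    have h2 := hcov μ e₀ (ΓP.symm.trans ΔP).toContinuousMap (fun t => hM t)
      (ΓP.symm.trans ΔP).target
    calc Ψ₀ e = (ΓP.symm.trans ΔP) 0 := ((ΓP.symm.trans ΔP).source).symm
    _ = Ψ₀ (loopClass μ • e₀) := h2
  -- in C'
  obtain ⟨Δ', hΔ'1, hΔ'φ⟩ := hφ'.pathLiftEnd lc.toContinuousMap (Ψ₀' e₀)
    (by rw [hfib']; simp)
  have hΔ'0 : Δ' 0 = Ψ' (φ (Γ 0)) lc e₀ := hΨ' _ lc e₀ Δ' (fun t => hΔ'φ t) hΔ'1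
  obtain ⟨Γ'', hΓ''0, hΓ''φ⟩ := hφ'.pathLift l.toContinuousMap (Δ' 0)
    (by rw [hΔ'φ 0]; simp)
  set Γ''P : Path (Δ' 0) (Γ'' 1) := ⟨Γ'', hΓ''0, rfl⟩ with hΓ''P
  set Δ'P : Path (Δ' 0) (Ψ₀' e₀) := ⟨Δ', rfl, hΔ'1⟩ with hΔ'P
  have hM' : ∀ t, φ' ((Γ''P.symm.trans Δ'P) t) = μ t :=
    lift_trans (lift_symm (fun t => hΓ''φ t)) (fun t => hΔ'φ t)
  have hend : Γ'' 1 = Ψ₀' e := by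
    have h2 := hcov' μ e₀ (Γ''P.symm.trans Δ'P).toContinuousMap (fun t => hM' t)
      (Γ''P.symm.trans Δ'P).target
    calc Γ'' 1 = (Γ''P.symm.trans Δ'P) 0 := ((Γ''P.symm.trans Δ'P).source).symm
    _ = Ψ₀' (loopClass μ • e₀) := h2
    _ = Ψ₀' e := by rw [he]
  have hfin : Γ'' 0 = Ψ' (φ (Γ 0)) l e := hΨ' _ l e Γ'' (fun t => hΓ''φ t) hend
  show Ψ' (φ (Γ 0)) lc e₀ = Ψ' (φ (Γ 0)) l e
  rw [← hfin, hΓ''0, hΔ'0]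

lemma key_maps_triv (hφ : IsCoveringMap φ) (Ψ₀ : E → C) (hfib : ∀ e, φ (Ψ₀ e) = x₀)
    (Ψ : ∀ x : X, Path x x₀ → E → C) (hΨ : IsTrivializationOf φ x₀ Ψ₀ Ψ)
    (Ψ' : ∀ x : X, Path x x₀ → E → C') (F : C → C')
    (hkey : ∀ (x : X) (l : Path x x₀) (e : E) (Γ : C(I, C)),
      (∀ t, φ (Γ t) = l t) → Γ 1 = Ψ₀ e → F (Γ 0) = Ψ' x l e) :
    ∀ (x : X) (l : Path x x₀) (e : E), F (Ψ x l e) = Ψ' x l e := by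
  intro x l e
  obtain ⟨Γ, hΓ1, hΓφ⟩ := hφ.pathLiftEnd l.toContinuousMap (Ψ₀ e) (by rw [hfib]; simp)
  have h0 := hΨ x l e Γ (fun t => hΓφ t) hΓ1
  rw [← h0]
  exact hkey x l e Γ (fun t => hΓφ t) hΓ1

lemma key_maps_base (hφ' : IsCoveringMap φ') (Ψ₀ : E → C) (hfib : ∀ e, φ (Ψ₀ e) = x₀)
    (Ψ₀' : E → C') (hfib' : ∀ e, φ' (Ψ₀' e) = x₀)
    (Ψ' : ∀ x : X, Path x x₀ → E → C') (hΨ' : IsTrivializationOf φ' x₀ Ψ₀' Ψ') (F : C → C')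
    (hkey : ∀ (x : X) (l : Path x x₀) (e : E) (Γ : C(I, C)),
      (∀ t, φ (Γ t) = l t) → Γ 1 = Ψ₀ e → F (Γ 0) = Ψ' x l e) :
    ∀ e, F (Ψ₀ e) = Ψ₀' e := by
  intro e
  have h1 : F (Ψ₀ e) = Ψ' x₀ (Path.refl x₀) e := by
    have := hkey x₀ (Path.refl x₀) e (ContinuousMap.const I (Ψ₀ e))
      (fun t => by simp [hfib]) rfl
    simpa using this
  have h2 : Ψ₀' e = Ψ' x₀ (Path.refl x₀) e :=
    hΨ' x₀ (Path.refl x₀) e (ContinuousMap.const I (Ψ₀' e)) (fun t => by simp [hfib']) rfl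
  rw [h1, ← h2]

lemma key_comm (hφ : IsCoveringMap φ) (hφ' : IsCoveringMap φ')
    (Ψ₀ : E → C) (hsurj : ∀ c : C, φ c = x₀ → ∃ e, Ψ₀ e = c)
    (Ψ₀' : E → C') (hfib' : ∀ e, φ' (Ψ₀' e) = x₀)
    (Ψ' : ∀ x : X, Path x x₀ → E → C') (hΨ' : IsTrivializationOf φ' x₀ Ψ₀' Ψ') (F : C → C')
    (hkey : ∀ (x : X) (l : Path x x₀) (e : E) (Γ : C(I, C)),
      (∀ t, φ (Γ t) = l t) → Γ 1 = Ψ₀ e → F (Γ 0) = Ψ' x l e) :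
    ∀ c, φ' (F c) = φ c := by
  intro c
  obtain ⟨Γ, hΓ0, hΓφ⟩ := hφ.pathLift (PathConnectedSpace.somePath (φ c) x₀).toContinuousMap
    c (by simp)
  obtain ⟨e, he⟩ := hsurj (Γ 1) (by rw [hΓφ 1]; simp)
  have h1 : F c = Ψ' (φ c) (PathConnectedSpace.somePath (φ c) x₀) e := by
    have := hkey (φ c) _ e Γ (fun t => hΓφ t) he.symm
    rwa [hΓ0] at this
  obtain ⟨Δ', hΔ'1, hΔ'φ⟩ := hφ'.pathLiftEnd
    (PathConnectedSpace.somePath (φ c) x₀).toContinuousMap (Ψ₀' e) (by rw [hfib']; simp)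
  have h2 := hΨ' (φ c) _ e Δ' (fun t => hΔ'φ t) hΔ'1
  rw [h1, ← h2, hΔ'φ 0]
  simp

lemma key_unique (hφ : IsCoveringMap φ) (hφ' : IsCoveringMap φ')
    (Ψ₀ : E → C) (hsurj : ∀ c : C, φ c = x₀ → ∃ e, Ψ₀ e = c) (Ψ₀' : E → C')
    (G₁ G₂ : C → C') (h₁c : Continuous G₁) (h₂c : Continuous G₂)
    (h₁φ : ∀ c, φ' (G₁ c) = φ c) (h₂φ : ∀ c, φ' (G₂ c) = φ c)
    (h₁b : ∀ e, G₁ (Ψ₀ e) = Ψ₀' e) (h₂b : ∀ e, G₂ (Ψ₀ e) = Ψ₀' e) : G₁ = G₂ := by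
  funext c
  obtain ⟨Γ, hΓ0, hΓφ⟩ := hφ.pathLift (PathConnectedSpace.somePath (φ c) x₀).toContinuousMap
    c (by simp)
  obtain ⟨e, he⟩ := hsurj (Γ 1) (by rw [hΓφ 1]; simp)
  have := hφ'.eq_of_comp_eq (g₁ := G₁ ∘ Γ) (g₂ := G₂ ∘ Γ)
    (h₁c.comp Γ.continuous) (h₂c.comp Γ.continuous)
    (funext fun t => by simp [Function.comp, h₁φ, h₂φ]) 1
    (by simp only [Function.comp]; rw [← he, h₁b, h₂b])
  have h0 := congrFun this 0
  simpa [Function.comp, hΓ0] using h0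

lemma key_continuous [LocallyPathConnectedSpace X] (hφ : IsCoveringMap φ) (hφ' : IsCoveringMap φ')
    (Ψ₀ : E → C) (hsurj : ∀ c : C, φ c = x₀ → ∃ e, Ψ₀ e = c)
    (Ψ₀' : E → C') (hfib' : ∀ e, φ' (Ψ₀' e) = x₀)
    (Ψ' : ∀ x : X, Path x x₀ → E → C') (hΨ' : IsTrivializationOf φ' x₀ Ψ₀' Ψ') (F : C → C')
    (hkey : ∀ (x : X) (l : Path x x₀) (e : E) (Γ : C(I, C)),
      (∀ t, φ (Γ t) = l t) → Γ 1 = Ψ₀ e → F (Γ 0) = Ψ' x l e) :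
    Continuous F := by
  rw [continuous_iff_continuousAt]
  intro c₀
  set x₁ := φ c₀ with hx₁
  haveI : Nonempty (φ ⁻¹' {x₁}) := ⟨⟨c₀, rfl⟩⟩
  haveI : Nonempty (φ' ⁻¹' {x₁}) := by
    obtain ⟨Δ, -, hΔφ⟩ := hφ.pathLift (PathConnectedSpace.somePath x₁ x₀).toContinuousMap
      c₀ (by simp [hx₁])
    obtain ⟨e₀, -⟩ := hsurj (Δ 1) (by rw [hΔφ 1]; simp)
    obtain ⟨Δ', -, hΔ'φ⟩ := hφ'.pathLiftEnd
      (PathConnectedSpace.somePath x₁ x₀).toContinuousMap (Ψ₀' e₀) (by rw [hfib']; simp)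
    exact ⟨⟨Δ' 0, show φ' (Δ' 0) = x₁ by rw [hΔ'φ 0]; simp⟩⟩
  set T := (hφ x₁).toTrivialization with hT
  set T' := (hφ' x₁).toTrivialization with hT'
  have hb : x₁ ∈ T.baseSet := IsEvenlyCovered.mem_toTrivialization_baseSet _
  have hb' : x₁ ∈ T'.baseSet := IsEvenlyCovered.mem_toTrivialization_baseSet _
  obtain ⟨V, ⟨hVopen, hxV, hVpc⟩, hVsub⟩ := (isOpen_isPathConnected_basis x₁).mem_iff.1
    (Filter.inter_mem (T.open_baseSet.mem_nhds hb) (T'.open_baseSet.mem_nhds hb'))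
  -- data at c₀
  obtain ⟨Δ, hΔ0, hΔφ⟩ := hφ.pathLift (PathConnectedSpace.somePath x₁ x₀).toContinuousMap
    c₀ (by simp [hx₁])
  obtain ⟨e₀, he₀⟩ := hsurj (Δ 1) (by rw [hΔφ 1]; simp)
  obtain ⟨Δ', hΔ'1, hΔ'φ⟩ := hφ'.pathLiftEnd
    (PathConnectedSpace.somePath x₁ x₀).toContinuousMap (Ψ₀' e₀) (by rw [hfib']; simp)
  have hq₀ : φ' (Δ' 0) = x₁ := by rw [hΔ'φ 0]; simp
  have hq₀src : Δ' 0 ∈ T'.source := T'.mem_source.2 (by rw [hq₀]; exact hb')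
  -- the open neighbourhood W of c₀
  set W : Set C := φ ⁻¹' V ∩ (T.source ∩ ⇑T ⁻¹' (Set.univ ×ˢ {(T c₀).2})) with hW
  haveI hdisc : DiscreteTopology (φ ⁻¹' {x₁} : Set C) := (hφ x₁).1
  have hWopen : IsOpen W := by
    refine (hVopen.preimage hφ.continuous).inter ?_
    have hset : IsOpen ((Set.univ ×ˢ {(T c₀).2}) : Set (X × (φ ⁻¹' {x₁} : Set C))) :=
      isOpen_univ.prod (isOpen_discrete _)
    exact T.toOpenPartialHomeomorph.continuousOn.isOpen_inter_preimage T.open_source hset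
  have hc₀W : c₀ ∈ W := ⟨hxV, T.mem_source.2 hb, ⟨trivial, rfl⟩⟩
  set g : C → C' := fun c => T'.toOpenPartialHomeomorph.symm (φ c, (T' (Δ' 0)).2) with hg
  have hgc : ContinuousAt g c₀ := by
    have htgt : T'.target ∈ nhds (x₁, (T' (Δ' 0)).2) :=
      T'.open_target.mem_nhds (T'.mem_target.2 hb')
    have h1 : ContinuousAt (fun c : C => ((φ c, (T' (Δ' 0)).2) : X × (φ' ⁻¹' {x₁} : Set C'))) c₀ :=
      (hφ.continuous.prodMk continuous_const).continuousAt
    have h2 : ContinuousAt (T'.toOpenPartialHomeomorph.symm) (x₁, (T' (Δ' 0)).2) :=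
      T'.toOpenPartialHomeomorph.continuousOn_symm.continuousAt htgt
    exact ContinuousAt.comp (x := c₀) h2 h1
  refine hgc.congr (Filter.eventuallyEq_of_mem (hWopen.mem_nhds hc₀W) fun c hcW => ?_).symm
  obtain ⟨hcV, hcsrc, -, hcsnd⟩ := hcW
  have hcsnd : (T c).2 = (T c₀).2 := hcsnd
  -- path p from φ c to x₁ inside V
  have hjoin : JoinedIn V (φ c) x₁ := hVpc.joinedIn _ hcV _ hxV
  set p : Path (φ c) x₁ := hjoin.somePath with hp
  have hpV : ∀ t, p t ∈ V := hjoin.somePath_mem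
  -- lift of p in C, from c to c₀
  set pc : I → C := fun t => T.toOpenPartialHomeomorph.symm (p t, (T c₀).2) with hpc
  have hpcφ : ∀ t, φ (pc t) = p t := fun t =>
    T.proj_symm_apply (T.mem_target.2 (hVsub (hpV t)).1)
  have hpccont : Continuous pc := by
    apply T.toOpenPartialHomeomorph.continuousOn_symm.comp_continuous
      ((p.continuous.prodMk continuous_const))
    intro t
    rw [T.target_eq]
    exact ⟨(hVsub (hpV t)).1, trivial⟩
  have hpc1 : pc 1 = c₀ := by
    show T.toOpenPartialHomeomorph.symm (p 1, (T c₀).2) = c₀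
    rw [p.target]
    exact T.symm_apply_mk_proj (T.mem_source.2 hb)
  have hpc0 : pc 0 = c := by
    show T.toOpenPartialHomeomorph.symm (p 0, (T c₀).2) = c
    rw [p.source, ← hcsnd]
    exact T.symm_apply_mk_proj hcsrc
  set pcP : Path c c₀ := ⟨⟨pc, hpccont⟩, hpc0, hpc1⟩ with hpcP
  set ΔP : Path c₀ (Ψ₀ e₀) := ⟨Δ, hΔ0, he₀.symm⟩ with hΔP
  set l : Path (φ c) x₀ := p.trans (PathConnectedSpace.somePath x₁ x₀) with hl
  have hbigφ : ∀ t, φ ((pcP.trans ΔP) t) = l t :=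
    lift_trans (fun t => hpcφ t) (fun t => hΔφ t)
  have hFc : F c = Ψ' (φ c) l e₀ := by
    have := hkey (φ c) l e₀ (pcP.trans ΔP).toContinuousMap (fun t => hbigφ t)
      (pcP.trans ΔP).target
    rwa [show (pcP.trans ΔP).toContinuousMap 0 = c from (pcP.trans ΔP).source] at this
  -- lift of p in C', from g c to Δ' 0
  set pc' : I → C' := fun t => T'.toOpenPartialHomeomorph.symm (p t, (T' (Δ' 0)).2) with hpc'
  have hpc'φ : ∀ t, φ' (pc' t) = p t := fun t =>
    T'.proj_symm_apply (T'.mem_target.2 (hVsub (hpV t)).2)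
  have hpc'cont : Continuous pc' := by
    apply T'.toOpenPartialHomeomorph.continuousOn_symm.comp_continuous
      ((p.continuous.prodMk continuous_const))
    intro t
    rw [T'.target_eq]
    exact ⟨(hVsub (hpV t)).2, trivial⟩
  have hpc'1 : pc' 1 = Δ' 0 := by
    show T'.toOpenPartialHomeomorph.symm (p 1, (T' (Δ' 0)).2) = Δ' 0
    rw [p.target]
    have := T'.symm_apply_mk_proj hq₀src
    rwa [hq₀] at this
  set pc'P : Path (pc' 0) (Δ' 0) := ⟨⟨pc', hpc'cont⟩, rfl, hpc'1⟩ with hpc'P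
  set Δ'P : Path (Δ' 0) (Ψ₀' e₀) := ⟨Δ', rfl, hΔ'1⟩ with hΔ'P
  have hM'φ : ∀ t, φ' ((pc'P.trans Δ'P) t) = l t :=
    lift_trans (fun t => hpc'φ t) (fun t => hΔ'φ t)
  have hfin := hΨ' (φ c) l e₀ (pc'P.trans Δ'P).toContinuousMap (fun t => hM'φ t)
    (pc'P.trans Δ'P).target
  have hstart : (pc'P.trans Δ'P).toContinuousMap 0 = pc' 0 := (pc'P.trans Δ'P).source
  rw [hFc, ← hfin, hstart]
  show T'.toOpenPartialHomeomorph.symm (p 0, (T' (Δ' 0)).2) = g c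
  rw [p.source]

end Main

theorem exists_unique_iso_of_coverings'
    {X : Type} [TopologicalSpace X] [PathConnectedSpace X] [LocallyPathConnectedSpace X]
    (x₀ : X) (E : Type) [Finite E] [MulAction (FundamentalGroup X x₀) E]
    {C : Type} [TopologicalSpace C] (φ : C → X) (hφ : IsCoveringMap φ)
    {C' : Type} [TopologicalSpace C'] (φ' : C' → X) (hφ' : IsCoveringMap φ')
    (Ψ₀ : E → C) (hfib : ∀ e, φ (Ψ₀ e) = x₀) (hinj : Function.Injective Ψ₀)
    (hsurj : ∀ c : C, φ c = x₀ → ∃ e, Ψ₀ e = c)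
    (hcov : GammaCovariant φ x₀ Ψ₀)
    (Ψ₀' : E → C') (hfib' : ∀ e, φ' (Ψ₀' e) = x₀) (hinj' : Function.Injective Ψ₀')
    (hsurj' : ∀ c : C', φ' c = x₀ → ∃ e, Ψ₀' e = c)
    (hcov' : GammaCovariant φ' x₀ Ψ₀')
    (Ψ : ∀ x : X, Path x x₀ → E → C) (hΨ : IsTrivializationOf φ x₀ Ψ₀ Ψ)
    (Ψ' : ∀ x : X, Path x x₀ → E → C') (hΨ' : IsTrivializationOf φ' x₀ Ψ₀' Ψ') :
    ∃ F : C → C',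
      (Continuous F ∧ (∀ c, φ' (F c) = φ c) ∧ (∀ e, F (Ψ₀ e) = Ψ₀' e)) ∧
      (∀ G : C → C',
        Continuous G → (∀ c, φ' (G c) = φ c) → (∀ e, G (Ψ₀ e) = Ψ₀' e) → G = F) ∧
      IsHomeomorph F ∧
      (∀ (x : X) (l : Path x x₀) (e : E), F (Ψ x l e) = Ψ' x l e) := by
  obtain ⟨F, hkey⟩ := exists_main hφ hφ' Ψ₀ hinj hsurj hcov Ψ₀' hfib' hcov' Ψ' hΨ'
  obtain ⟨G, hkey'⟩ := exists_main hφ' hφ Ψ₀' hinj' hsurj' hcov' Ψ₀ hfib hcov Ψ hΨ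
  have hFc : Continuous F := key_continuous hφ hφ' Ψ₀ hsurj Ψ₀' hfib' Ψ' hΨ' F hkey
  have hGc : Continuous G := key_continuous hφ' hφ Ψ₀' hsurj' Ψ₀ hfib Ψ hΨ G hkey'
  have hFφ : ∀ c, φ' (F c) = φ c := key_comm hφ hφ' Ψ₀ hsurj Ψ₀' hfib' Ψ' hΨ' F hkey
  have hGφ : ∀ c, φ (G c) = φ' c := key_comm hφ' hφ Ψ₀' hsurj' Ψ₀ hfib Ψ hΨ G hkey'
  have hFb : ∀ e, F (Ψ₀ e) = Ψ₀' e := key_maps_base hφ' Ψ₀ hfib Ψ₀' hfib' Ψ' hΨ' F hkey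
  have hGb : ∀ e, G (Ψ₀' e) = Ψ₀ e := key_maps_base hφ Ψ₀' hfib' Ψ₀ hfib Ψ hΨ G hkey'
  have hGF : G ∘ F = id := by
    refine key_unique hφ hφ Ψ₀ hsurj Ψ₀ (G ∘ F) id (hGc.comp hFc) continuous_id
      (fun c => by simp [Function.comp, hGφ, hFφ]) (fun c => rfl)
      (fun e => by simp [Function.comp, hFb, hGb]) (fun e => rfl)
  have hFG : F ∘ G = id := by
    refine key_unique hφ' hφ' Ψ₀' hsurj' Ψ₀' (F ∘ G) id (hFc.comp hGc) continuous_id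
      (fun c => by simp [Function.comp, hFφ, hGφ]) (fun c => rfl)
      (fun e => by simp [Function.comp, hGb, hFb]) (fun e => rfl)
  refine ⟨F, ⟨hFc, hFφ, hFb⟩, ?_, ?_, ?_⟩
  · intro G' hG'c hG'φ hG'b
    exact key_unique hφ hφ' Ψ₀ hsurj Ψ₀' G' F hG'c hFc hG'φ hFφ hG'b hFb
  · exact isHomeomorph_iff_exists_inverse.2 ⟨hFc, G, congrFun hGF, congrFun hFG, hGc⟩
  · exact key_maps_triv hφ Ψ₀ hfib Ψ hΨ Ψ' F hkey

/-- Let `X` be path-connected and locally path-connected, `x₀ ∈ X`, `E` a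
finite set with a left action of `Γ = π₁(X, x₀)`. Let `φ : C → X`, `φ' : C' → X` be covering
maps with `Γ`-covariant bijections `Ψ₀ : E → φ⁻¹(x₀)`, `Ψ₀' : E → (φ')⁻¹(x₀)`. Then there
exists a unique continuous `F : C → C'` with `φ' ∘ F = φ` and `F ∘ Ψ₀ = Ψ₀'`; this `F` is a
homeomorphism, and `F (Ψ_λ e) = Ψ'_λ e` for every path `λ` ending at `x₀` and every `e`,
where `Ψ`, `Ψ'` are the trivializations determined by `Ψ₀`, `Ψ₀'`. -/
theorem exists_unique_iso_of_coverings
    {X : Type} [TopologicalSpace X] [PathConnectedSpace X] [LocallyPathConnectedSpace X]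
    (x₀ : X) (E : Type) [Finite E] [MulAction (FundamentalGroup X x₀) E]
    {C : Type} [TopologicalSpace C] (φ : C → X) (hφ : IsCoveringMap φ)
    {C' : Type} [TopologicalSpace C'] (φ' : C' → X) (hφ' : IsCoveringMap φ')
    (Ψ₀ : E → C) (hfib : ∀ e, φ (Ψ₀ e) = x₀) (hinj : Function.Injective Ψ₀)
    (hsurj : ∀ c : C, φ c = x₀ → ∃ e, Ψ₀ e = c)
    (hcov : GammaCovariant φ x₀ Ψ₀)
    (Ψ₀' : E → C') (hfib' : ∀ e, φ' (Ψ₀' e) = x₀) (hinj' : Function.Injective Ψ₀')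
    (hsurj' : ∀ c : C', φ' c = x₀ → ∃ e, Ψ₀' e = c)
    (hcov' : GammaCovariant φ' x₀ Ψ₀')
    (Ψ : ∀ x : X, Path x x₀ → E → C) (hΨ : IsTrivializationOf φ x₀ Ψ₀ Ψ)
    (Ψ' : ∀ x : X, Path x x₀ → E → C') (hΨ' : IsTrivializationOf φ' x₀ Ψ₀' Ψ') :
    ∃ F : C → C',
      (Continuous F ∧ (∀ c, φ' (F c) = φ c) ∧ (∀ e, F (Ψ₀ e) = Ψ₀' e)) ∧
      (∀ G : C → C',
        Continuous G → (∀ c, φ' (G c) = φ c) → (∀ e, G (Ψ₀ e) = Ψ₀' e) → G = F) ∧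
      IsHomeomorph F ∧
      (∀ (x : X) (l : Path x x₀) (e : E), F (Ψ x l e) = Ψ' x l e) :=
  exists_unique_iso_of_coverings' x₀ E φ hφ φ' hφ' Ψ₀ hfib hinj hsurj hcov
    Ψ₀' hfib' hinj' hsurj' hcov' Ψ hΨ Ψ' hΨ'
end

section
/- Let φ : C → X be a covering map, x₀ ∈ X, E a set with a left action of Γ = π₁(X, x₀), Ψ₀ : E → φ⁻¹(x₀) a Γ-covariant bijection, and Ψ the trivialization determined by Ψ₀. Let σ be a path in X from x₀ to a point x₁, set Γ' = π₁(X, x₁), and let Γ' act on E by [μ']·e := [σμ'σ⁻¹]·e for loops μ' based at x₁ (the action transported through the isomorphism Γ → Γ', [μ] ↦ [σ⁻¹μσ]). Define Ψ₁ : E → φ⁻¹(x₁) by Ψ₁(e) = Ψ_{σ⁻¹}(e). Then Ψ₁ is a Γ'-covariant bijection, and, denoting by Ψ' the trivialization (with respect to the basepoint x₁) determined by Ψ₁, one has Ψ_λ(e) = Ψ'_{λσ}(e) for every path λ in X ending at x₀ and every e ∈ E. -/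
open Set

open Set

theorem my_exists_lift {C X : Type} [TopologicalSpace C] [TopologicalSpace X]
    {φ : C → X} (hφ : IsCoveringMap φ) (γ : C(unitInterval, X)) (c : C) (hc : φ c = γ 0) :
    ∃ Γ : C(unitInterval, C), Γ 0 = c ∧ ∀ t, φ (Γ t) = γ t := by
  obtain ⟨Γ, hΓ, hΓ0⟩ := hφ.exists_path_lifts γ c hc.symm
  exact ⟨Γ, hΓ0, fun t => congrFun hΓ t⟩

theorem my_exists_lift_end {C X : Type} [TopologicalSpace C] [TopologicalSpace X]
    {φ : C → X} (hφ : IsCoveringMap φ) (γ : C(unitInterval, X)) (c : C) (hc : φ c = γ 1) :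
    ∃ Γ : C(unitInterval, C), Γ 1 = c ∧ ∀ t, φ (Γ t) = γ t := by
  have hc' : φ c = (γ.comp ⟨unitInterval.symm, unitInterval.continuous_symm⟩) 0 := by
    simpa using hc
  obtain ⟨Γ, hΓ0, hΓ⟩ := my_exists_lift hφ
    (γ.comp ⟨unitInterval.symm, unitInterval.continuous_symm⟩) c hc'
  refine ⟨Γ.comp ⟨unitInterval.symm, unitInterval.continuous_symm⟩, by simpa using hΓ0,
    fun t => ?_⟩
  have := hΓ (unitInterval.symm t)
  simpa using this


/-- change of basepoint. Let `φ : C → X` be a covering map, `x₀ ∈ X`, `E` a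
set with a left action of `Γ = π₁(X, x₀)`, `Ψ₀ : E → φ⁻¹(x₀)` a `Γ`-covariant bijection, and
`Ψ` the trivialization determined by `Ψ₀`. Let `σ` be a path from `x₀` to `x₁`, and let
`Γ' = π₁(X, x₁)` act on `E` by `[μ'] • e := [σ μ' σ⁻¹] • e`. Define `Ψ₁ : E → φ⁻¹(x₁)` by
`Ψ₁ e = Ψ_{σ⁻¹} e`. Then `Ψ₁` is a `Γ'`-covariant bijection, and, denoting by `Ψ'` the
trivialization (with respect to the basepoint `x₁`) determined by `Ψ₁`, one has
`Ψ_λ e = Ψ'_{λσ} e` for every path `λ` ending at `x₀` and every `e`. -/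
theorem change_of_basepoint
    {C X : Type} [TopologicalSpace C] [TopologicalSpace X]
    (φ : C → X) (hφ : IsCoveringMap φ) (x₀ : X)
    (E : Type) [MulAction (FundamentalGroup X x₀) E]
    (Ψ₀ : E → C) (hfib : ∀ e, φ (Ψ₀ e) = x₀) (hinj : Function.Injective Ψ₀)
    (hsurj : ∀ c : C, φ c = x₀ → ∃ e, Ψ₀ e = c)
    (hcov : GammaCovariant φ x₀ Ψ₀)
    (Ψ : ∀ x : X, Path x x₀ → E → C) (hΨ : IsTrivializationOf φ x₀ Ψ₀ Ψ)
    (x₁ : X) (σ : Path x₀ x₁) :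
    -- `Ψ₁ := Ψ_{σ⁻¹}` is a bijection from `E` onto the fiber `φ⁻¹(x₁)` …
    (∀ e, φ (Ψ x₁ σ.symm e) = x₁) ∧
    Function.Injective (fun e => Ψ x₁ σ.symm e) ∧
    (∀ c : C, φ c = x₁ → ∃ e, Ψ x₁ σ.symm e = c) ∧
    -- … which is `Γ'`-covariant for the action of `Γ' = π₁(X, x₁)` transported through `σ`:
    (∀ (μ' : Path x₁ x₁) (e : E) (γ' : C(unitInterval, C)),
      (∀ t, φ (γ' t) = μ' t) → γ' 1 = Ψ x₁ σ.symm e →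
      γ' 0 = Ψ x₁ σ.symm (loopClass ((σ.trans μ').trans σ.symm) • e)) ∧
    -- and the trivialization `Ψ'` determined by `Ψ₁` satisfies `Ψ_λ e = Ψ'_{λσ} e`:
    (∀ Ψ' : ∀ x : X, Path x x₁ → E → C,
      IsTrivializationOf φ x₁ (fun e => Ψ x₁ σ.symm e) Ψ' →
      ∀ (x : X) (l : Path x x₀) (e : E), Ψ x l e = Ψ' x (l.trans σ) e) := by
  -- canonical lift of a path `l : Path x x₀` ending at `Ψ₀ e`
  have lift : ∀ (x : X) (l : Path x x₀) (e : E), ∃ Γ : C(unitInterval, C),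
      (∀ t, φ (Γ t) = l t) ∧ Γ 1 = Ψ₀ e ∧ Γ 0 = Ψ x l e := by
    intro x l e
    obtain ⟨Γ, hΓ1, hΓ⟩ := my_exists_lift_end hφ l.toContinuousMap (Ψ₀ e)
      (by simpa using hfib e)
    exact ⟨Γ, hΓ, hΓ1, hΨ x l e Γ hΓ hΓ1⟩
  have fiber : ∀ e, φ (Ψ x₁ σ.symm e) = x₁ := by
    intro e
    obtain ⟨Γ, hΓ, hΓ1, hΓ0⟩ := lift x₁ σ.symm e
    rw [← hΓ0, hΓ 0, Path.source]
  refine ⟨fiber, ?_, ?_, ?_, ?_⟩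
  · -- injective
    intro e e' h
    obtain ⟨Γ, hΓ, hΓ1, hΓ0⟩ := lift x₁ σ.symm e
    obtain ⟨Γ', hΓ', hΓ1', hΓ0'⟩ := lift x₁ σ.symm e'
    have : (Γ : unitInterval → C) = Γ' := by
      apply hφ.eq_of_comp_eq Γ.continuous Γ'.continuous
        (funext fun t => by rw [Function.comp_apply, Function.comp_apply, hΓ t, hΓ' t]) 0
      rw [hΓ0, hΓ0']; exact h
    apply hinj
    rw [← hΓ1, ← hΓ1', this]
  · -- surjective onto fiber
    intro c hc
    obtain ⟨Γ, hΓ0, hΓ⟩ := my_exists_lift hφ σ.symm.toContinuousMap c (by simpa using hc)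
    obtain ⟨e, he⟩ := hsurj (Γ 1) (by rw [hΓ 1]; simp)
    exact ⟨e, (hΨ x₁ σ.symm e Γ hΓ he.symm).symm.trans hΓ0⟩
  · -- covariance
    intro μ' e γ' hγ' hγ'1
    obtain ⟨D, hD, hD1, hD0⟩ := lift x₁ σ.symm e
    obtain ⟨B, hB1, hB⟩ := my_exists_lift_end hφ σ.toContinuousMap (γ' 0)
      (by rw [hγ' 0, Path.source]; simp)
    -- assemble the big lift of (σ.trans μ').trans σ.symm ending at Ψ₀ e
    set PB : Path (B 0) (B 1) := ⟨B, rfl, rfl⟩ with hPB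
    set PQ : Path (B 1) (D 0) := ⟨γ', hB1.symm, hγ'1.trans hD0.symm⟩ with hPQ
    set PD : Path (D 0) (Ψ₀ e) := ⟨D, rfl, hD1⟩ with hPD
    set Big : Path (B 0) (Ψ₀ e) := (PB.trans PQ).trans PD with hBig
    have hlift : ∀ t, φ (Big.toContinuousMap t) = ((σ.trans μ').trans σ.symm) t := by
      intro t
      show φ (Big t) = _
      rw [hBig]
      simp only [Path.trans_apply]
      split_ifs
      · exact hB _
      · exact hγ' _
      · exact hD _
    have hB0 : B 0 = Ψ₀ (loopClass ((σ.trans μ').trans σ.symm) • e) := by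
      have := hcov ((σ.trans μ').trans σ.symm) e Big.toContinuousMap hlift
        (by show Big 1 = _; simp)
      rw [← this]; show B 0 = Big 0; simp [hBig]
    -- reversed B is a lift of σ.symm ending at Ψ₀ (g • e), starting at γ' 0
    set Brev : C(unitInterval, C) :=
      (⟨B, rfl, rfl⟩ : Path (B 0) (B 1)).symm.toContinuousMap with hBrev
    have h1 : ∀ t, φ (Brev t) = σ.symm t := by
      intro t
      show φ (B (unitInterval.symm t)) = σ (unitInterval.symm t)
      exact hB _
    have h2 : Brev 1 = Ψ₀ (loopClass ((σ.trans μ').trans σ.symm) • e) := by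
      show B (unitInterval.symm 1) = _
      rw [unitInterval.symm_one, hB0]
    have := hΨ x₁ σ.symm _ Brev h1 h2
    rw [← this]
    show _ = B (unitInterval.symm 0)
    rw [unitInterval.symm_zero, hB1]
  · -- compatibility of trivializations
    intro Ψ' hΨ' x l e
    obtain ⟨L, hL, hL1, hL0⟩ := lift x l e
    obtain ⟨D, hD, hD1, hD0⟩ := lift x₁ σ.symm e
    set PL : Path (L 0) (L 1) := ⟨L, rfl, rfl⟩ with hPL
    set PD : Path (L 1) (D 0) :=
      ((⟨D, rfl, rfl⟩ : Path (D 0) (D 1)).symm.cast (by rw [hD1, hL1]) rfl) with hPD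
    set Big : Path (L 0) (D 0) := PL.trans PD with hBig
    have hlift : ∀ t, φ (Big.toContinuousMap t) = (l.trans σ) t := by
      intro t
      show φ (Big t) = _
      rw [hBig]
      simp only [Path.trans_apply]
      split_ifs
      · exact hL _
      · show φ (D (unitInterval.symm _)) = σ _
        rw [hD]
        simp
    have hend : Big.toContinuousMap 1 = Ψ x₁ σ.symm e := hD0 ▸ Big.target
    have := hΨ' x (l.trans σ) e Big.toContinuousMap hlift hend
    rw [← this]
    exact (Big.source.trans hL0).symm
end

section
/- Let X be a path-connected, locally path-connected topological space, x₀ ∈ X, E a finite set with a left action of Γ = π₁(X, x₀), φ : C → X a covering map, and Ψ₀ : E → φ⁻¹(x₀) a Γ-covariant bijection. Then for e₁, e₂ ∈ E, the points Ψ₀(e₁) and Ψ₀(e₂) lie in the same path component of C if and only if e₁ and e₂ lie in the same Γ-orbit of E. Consequently Ψ₀ induces a bijection between the set of Γ-orbits of E and the set of path components of C, and for each Γ-orbit Ω the restriction of φ to the path component C^Ω of C containing Ψ₀(Ω) is a covering map onto X each of whose fibers has exactly |Ω| elements. -/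
open Set unitInterval

section Lift
open Set unitInterval Topology
variable {C X : Type} [TopologicalSpace C] [TopologicalSpace X] {φ : C → X}

/-- Path lifting for covering maps, starting point prescribed. -/
theorem IsCoveringMap.exists_lift_cm (hφ : IsCoveringMap φ) (γ : C(I, X)) (c : C)
    (hc : φ c = γ 0) : ∃ g : C(I, C), g 0 = c ∧ ∀ t, φ (g t) = γ t := by
  obtain ⟨g, hg, hg0⟩ := hφ.exists_path_lifts γ c hc.symm
  exact ⟨g, hg0, fun t => congrFun hg t⟩

theorem IsCoveringMap.lift_unique_cm (hφ : IsCoveringMap φ) {g₁ g₂ : C(I, C)}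
    (h : ∀ s, φ (g₁ s) = φ (g₂ s)) {a : I} (ha : g₁ a = g₂ a) : ∀ s, g₁ s = g₂ s := by
  have := hφ.eq_of_comp_eq g₁.continuous g₂.continuous (funext h) a ha
  exact fun s => congrFun this s

theorem IsCoveringMap.exists_lift_end (hφ : IsCoveringMap φ) (γ : C(I, X)) (c : C)
    (hc : φ c = γ 1) : ∃ g : C(I, C), g 1 = c ∧ ∀ s, φ (g s) = γ s := by
  obtain ⟨g₀, hg0, hg⟩ := hφ.exists_lift_cm
    (γ.comp ⟨unitInterval.symm, unitInterval.continuous_symm⟩) c (by simpa using hc)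
  refine ⟨g₀.comp ⟨unitInterval.symm, unitInterval.continuous_symm⟩, by simpa using hg0,
    fun s => ?_⟩
  simpa [unitInterval.symm_symm] using hg (unitInterval.symm s)

end Lift



section Restrict
open Set unitInterval Topology
variable {C X : Type} [TopologicalSpace C] [TopologicalSpace X] {φ : C → X}

theorem IsCoveringMap.toTrivialization_fiber_apply (hφ : IsCoveringMap φ) (x : X)
    [Nonempty ↥(φ ⁻¹' {x})]
    (i : ↥(φ ⁻¹' {x})) : (hφ x).toTrivialization (i : C) = (x, i) := by
  obtain ⟨c, hc⟩ := i
  have hc' : φ c = x := hc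
  subst hc'
  refine Prod.ext ?_ ?_
  · exact (hφ (φ c)).toTrivialization.coe_fst
      (((hφ (φ c)).toTrivialization.mem_source).mpr (hφ (φ c)).mem_toTrivialization_baseSet)
  · exact Subtype.ext (congrArg Subtype.val (hφ (φ c)).toTrivialization_apply)

theorem IsCoveringMap.restrict_pathComponent [LocallyPathConnectedSpace X]
    (hφ : IsCoveringMap φ) (c₀ : C)
    (hsur : ∀ x : X, ∃ c, c ∈ pathComponent c₀ ∧ φ c = x) :
    IsCoveringMap ((pathComponent c₀).restrict φ) := by
  classical
  intro x
  set K := pathComponent c₀ with hK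
  obtain ⟨cx, hcxK, hcxφ⟩ := hsur x
  haveI : Nonempty ↥(φ ⁻¹' {x}) := ⟨⟨cx, hcxφ⟩⟩
  set T := (hφ x).toTrivialization with hT
  have hxT : x ∈ T.baseSet := (hφ x).mem_toTrivialization_baseSet
  haveI hdisc : DiscreteTopology ↥(φ ⁻¹' {x}) := (hφ x).1
  obtain ⟨U, ⟨hUopen, hxU, hUpc⟩, hUsub⟩ :=
    (isOpen_isPathConnected_basis x).mem_iff.mp (T.open_baseSet.mem_nhds hxT)
  set sm : ↥(φ ⁻¹' {x}) → X → C := fun i x' => T.toOpenPartialHomeomorph.symm (x', i) with hsm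
  have hA : ∀ (i : ↥(φ ⁻¹' {x})) (x' : X), x' ∈ U → sm i x' ∈ T.source ∧ φ (sm i x') = x' ∧
      T (sm i x') = (x', i) := by
    intro i x' hx'
    have ht : ((x' : X), i) ∈ T.target := T.mem_target.mpr (hUsub hx')
    exact ⟨T.map_target ht, T.proj_symm_apply ht, T.apply_symm_apply ht⟩
  have hBpc : ∀ i : ↥(φ ⁻¹' {x}), IsPathConnected (sm i '' U) := by
    intro i
    refine hUpc.image' (ContinuousOn.comp T.toOpenPartialHomeomorph.continuousOn_symm
      (Continuous.continuousOn (by continuity)) ?_)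
    intro x' hx'
    exact T.mem_target.mpr (hUsub hx')
  have hix : ∀ i : ↥(φ ⁻¹' {x}), sm i x = (i : C) := by
    intro i
    have h1 : (i : C) ∈ T.source := T.mem_source.mpr
      (by rw [show φ (i : C) = x from i.2]; exact hxT)
    have h2 : T (i : C) = (x, i) := hφ.toTrivialization_fiber_apply x i
    calc sm i x = T.toOpenPartialHomeomorph.symm (T (i : C)) := by rw [h2]
    _ = (i : C) := T.toOpenPartialHomeomorph.left_inv h1
  have hjoin : ∀ (i : ↥(φ ⁻¹' {x})) (x' : X), x' ∈ U → Joined ((i : C)) (sm i x') :=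
    fun i x' hx' => ((hBpc i).joinedIn _ ⟨x, hxU, hix i⟩ _ ⟨x', hx', rfl⟩).joined
  -- second components of points of K over U are in K
  have hmemD : ∀ c' : C, c' ∈ K → φ c' ∈ U → (((T c').2 : C) ∈ K) := by
    intro c' hc'K h
    have hc's : c' ∈ T.source := T.mem_source.mpr (hUsub h)
    have h1 : c' ∈ sm ((T c').2) '' U := ⟨φ c', h, T.symm_apply_mk_proj hc's⟩
    have h2 : Joined c' (((T c').2 : C)) :=
      ((hBpc _).joinedIn _ h1 _ ⟨x, hxU, hix _⟩).joined
    exact Joined.trans hc'K h2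
  set Ix := {i : ↥(φ ⁻¹' {x}) // (i : C) ∈ K} with hIx
  haveI : DiscreteTopology Ix := inferInstance
  have i₀ : Ix := ⟨⟨cx, hcxφ⟩, hcxK⟩
  have hmemK : ∀ (p : X × Ix), p.1 ∈ U → sm (p.2 : ↥(φ ⁻¹' {x})) p.1 ∈ K :=
    fun p hp => Joined.trans p.2.2 (hjoin _ _ hp)
  refine (IsEvenlyCovered.of_trivialization (t := (
    { toFun := fun c' : ↥K => (φ (c' : C),
        if h : φ (c' : C) ∈ U then ⟨(T (c' : C)).2, hmemD _ c'.2 h⟩ else i₀)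
      invFun := fun p : X × Ix => if h : p.1 ∈ U then ⟨sm (p.2 : ↥(φ ⁻¹' {x})) p.1, hmemK p h⟩
        else ⟨c₀, mem_pathComponent_self c₀⟩
      source := (fun c' : ↥K => φ (c' : C)) ⁻¹' U
      target := U ×ˢ (univ : Set Ix)
      map_source' := fun c' h => ⟨h, trivial⟩
      map_target' := by
        intro p hp
        simp only [dif_pos hp.1]
        show φ (sm (p.2 : ↥(φ ⁻¹' {x})) p.1) ∈ U
        rw [(hA _ _ hp.1).2.1]
        exact hp.1
      left_inv' := by
        intro c' h
        have h' : φ (c' : C) ∈ U := h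
        simp only [dif_pos h']
        exact Subtype.ext (T.symm_apply_mk_proj (T.mem_source.mpr (hUsub h')))
      right_inv' := by
        intro p hp
        have h1 := hA (p.2 : ↥(φ ⁻¹' {x})) p.1 hp.1
        simp only [dif_pos hp.1]
        have h2 : φ (sm (p.2 : ↥(φ ⁻¹' {x})) p.1) ∈ U := by rw [h1.2.1]; exact hp.1
        refine Prod.ext h1.2.1 ?_
        simp only [dif_pos h2]
        exact Subtype.ext (congrArg Prod.snd h1.2.2)
      open_source := (hUopen.preimage (hφ.continuous.comp continuous_subtype_val))
      open_target := hUopen.prod isOpen_univ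
      continuousOn_toFun := by
        apply ContinuousOn.prodMk
        · exact (hφ.continuous.comp continuous_subtype_val).continuousOn
        · refine (IsInducing.subtypeVal (t := {i : ↥(φ ⁻¹' {x}) | (i : C) ∈ K})).continuousOn_iff.mpr ?_
          have hsnd : ContinuousOn (fun c' : ↥K => ((T (c' : C)).2 : ↥(φ ⁻¹' {x})))
              ((fun c' : ↥K => φ (c' : C)) ⁻¹' U) := by
            apply Continuous.comp_continuousOn continuous_snd
            apply T.toOpenPartialHomeomorph.continuousOn_toFun.comp
              continuous_subtype_val.continuousOn
            intro c' hc'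
            exact T.mem_source.mpr (hUsub hc')
          refine ContinuousOn.congr hsnd ?_
          intro c' hc'
          have h' : φ (c' : C) ∈ U := hc'
          simp only [Function.comp_apply, dif_pos h']
      continuousOn_invFun := by
        rw [IsInducing.subtypeVal.continuousOn_iff]
        have hinv : ContinuousOn (fun p : X × Ix =>
            T.toOpenPartialHomeomorph.symm (p.1, ((p.2 : ↥(φ ⁻¹' {x})) : ↥(φ ⁻¹' {x}))))
            (U ×ˢ (univ : Set Ix)) := by
          apply T.toOpenPartialHomeomorph.continuousOn_symm.comp
          · exact (continuous_fst.prodMk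
              (continuous_subtype_val.comp continuous_snd)).continuousOn
          · intro p hp
            exact T.mem_target.mpr (hUsub hp.1)
        refine ContinuousOn.congr hinv ?_
        intro p hp
        have h' : p.1 ∈ U := hp.1
        simp only [Function.comp_apply, dif_pos h']
        rfl
      baseSet := U
      open_baseSet := hUopen
      source_eq := rfl
      target_eq := rfl
      proj_toFun := fun c' _ => rfl } : Bundle.Trivialization Ix (K.restrict φ))) hxU).to_isEvenlyCovered_preimage
end Restrict


section Transport
open Set unitInterval Topology
variable {C X : Type} [TopologicalSpace C] [TopologicalSpace X] {φ : C → X}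

theorem IsCoveringMap.fiber_transport (hφ : IsCoveringMap φ) {x y : X} (p : Path x y) :
    ∃ f : {c : C // φ c = x} → {c : C // φ c = y},
      Function.Bijective f ∧ ∀ c, Joined c.1 (f c).1 := by
  have key : ∀ c : {c : C // φ c = x}, ∃ g : C(I, C), g 0 = (c : C) ∧ ∀ s, φ (g s) = p.toContinuousMap s :=
    fun c => hφ.exists_lift_cm p.toContinuousMap c (by simp [c.2])
  choose g hg0 hgl using key
  refine ⟨fun c => ⟨g c 1, by rw [hgl c 1]; simp⟩, ⟨?_, ?_⟩,
    fun c => ⟨⟨g c, hg0 c, rfl⟩⟩⟩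
  · intro c₁ c₂ h
    have ha : g c₁ 1 = g c₂ 1 := congrArg Subtype.val h
    have h2 : ∀ s, g c₁ s = g c₂ s :=
      hφ.lift_unique_cm (fun s => by rw [hgl c₁ s, hgl c₂ s]) ha
    exact Subtype.ext (by rw [← hg0 c₁, ← hg0 c₂, h2 0])
  · intro d
    obtain ⟨g', hg'1, hg'⟩ := hφ.exists_lift_end p.toContinuousMap (d : C) (by simp [d.2])
    have hc : φ (g' 0) = x := by rw [hg' 0]; simp
    refine ⟨⟨g' 0, hc⟩, ?_⟩
    have ha : g ⟨g' 0, hc⟩ 0 = g' 0 := hg0 _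
    have h2 : ∀ s, g ⟨g' 0, hc⟩ s = g' s :=
      hφ.lift_unique_cm (fun s => by rw [hgl _ s, hg' s]) ha
    exact Subtype.ext (by rw [show ((fun c => (⟨g c 1, by rw [hgl c 1]; simp⟩ :
      {c : C // φ c = y})) ⟨g' 0, hc⟩ : C) = g ⟨g' 0, hc⟩ 1 from rfl, h2 1, hg'1])

end Transport



/-- Let `X` be path-connected and locally path-connected, `x₀ ∈ X`, `E` a
finite set with a left action of `Γ = π₁(X, x₀)`, `φ : C → X` a covering map and
`Ψ₀ : E → φ⁻¹(x₀)` a `Γ`-covariant bijection. Then `Ψ₀ e₁` and `Ψ₀ e₂` lie in the same path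
component of `C` iff `e₁` and `e₂` lie in the same `Γ`-orbit; consequently `Ψ₀` induces a
bijection between the `Γ`-orbits of `E` and the path components of `C`, and for each orbit
`Ω` (of an element `e`) the restriction of `φ` to the path component of `C` containing
`Ψ₀ e` is a covering map onto `X` each of whose fibers has exactly `|Ω|` elements. -/
theorem orbits_biject_with_components
    {C X : Type} [TopologicalSpace C] [TopologicalSpace X]
    [PathConnectedSpace X] [LocallyPathConnectedSpace X] (x₀ : X)
    (E : Type) [Finite E] [MulAction (FundamentalGroup X x₀) E]
    (φ : C → X) (hφ : IsCoveringMap φ)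
    (Ψ₀ : E → C) (hfib : ∀ e, φ (Ψ₀ e) = x₀) (hinj : Function.Injective Ψ₀)
    (hsurj : ∀ c : C, φ c = x₀ → ∃ e, Ψ₀ e = c)
    (hcov : GammaCovariant φ x₀ Ψ₀) :
    -- same path component ↔ same `Γ`-orbit
    (∀ e₁ e₂ : E, Joined (Ψ₀ e₁) (Ψ₀ e₂) ↔
      e₁ ∈ MulAction.orbit (FundamentalGroup X x₀) e₂) ∧
    -- the induced bijection between orbits and path components
    (∃ b : Quotient (MulAction.orbitRel (FundamentalGroup X x₀) E) ≃ ZerothHomotopy C,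
      ∀ e : E, b (Quotient.mk (MulAction.orbitRel (FundamentalGroup X x₀) E) e)
        = Quotient.mk (pathSetoid C) (Ψ₀ e)) ∧
    -- the restriction of `φ` to each path component is a covering map onto `X`
    -- whose fibers all have exactly `|Ω|` elements
    (∀ e : E,
      IsCoveringMap ((pathComponent (Ψ₀ e)).restrict φ) ∧
      Function.Surjective ((pathComponent (Ψ₀ e)).restrict φ) ∧
      ∀ x : X, Nat.card ↥(((pathComponent (Ψ₀ e)).restrict φ) ⁻¹' {x})
        = Nat.card ↥(MulAction.orbit (FundamentalGroup X x₀) e)) := by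
  classical
  -- Part 1
  have part1 : ∀ e₁ e₂ : E, Joined (Ψ₀ e₁) (Ψ₀ e₂) ↔
      e₁ ∈ MulAction.orbit (FundamentalGroup X x₀) e₂ := by
    intro e₁ e₂
    constructor
    · rintro ⟨p⟩
      set μ : Path x₀ x₀ := ⟨⟨fun t => φ (p t), hφ.continuous.comp p.continuous⟩,
        by simp [hfib], by simp [hfib]⟩ with hμ
      have h0 : p.toContinuousMap 0 = Ψ₀ (loopClass μ • e₂) :=
        hcov μ e₂ p.toContinuousMap (fun t => rfl) (by simp)
      have h1 : Ψ₀ e₁ = Ψ₀ (loopClass μ • e₂) := by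
        rw [← h0]; simp
      exact MulAction.mem_orbit_iff.mpr ⟨loopClass μ, (hinj h1).symm⟩
    · intro h
      obtain ⟨γg, hγg⟩ := MulAction.mem_orbit_iff.mp h
      obtain ⟨μq, hμq⟩ := Quotient.exists_rep
        (γg : Path.Homotopic.Quotient x₀ x₀)
      have hloop : loopClass μq = γg := hμq
      obtain ⟨g, hg1, hgl⟩ := hφ.exists_lift_end μq.toContinuousMap (Ψ₀ e₂)
        (by rw [hfib]; simp)
      have h0 : g 0 = Ψ₀ (loopClass μq • e₂) := hcov μq e₂ g hgl hg1
      have h0' : g 0 = Ψ₀ e₁ := by rw [h0, hloop, hγg]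
      exact ⟨⟨g, h0', hg1⟩⟩
  refine ⟨part1, ?_, ?_⟩
  · -- Part 2 : the bijection
    have hsurjC : ∀ c : C, ∃ e : E, Joined (Ψ₀ e) c := by
      intro c
      obtain ⟨p⟩ : Joined x₀ (φ c) := PathConnectedSpace.joined x₀ (φ c)
      obtain ⟨g, hg1, hgl⟩ := hφ.exists_lift_end p.toContinuousMap c (by simp)
      obtain ⟨e, he⟩ := hsurj (g 0) (by rw [hgl 0]; simp)
      exact ⟨e, by rw [he]; exact ⟨⟨g, rfl, hg1⟩⟩⟩
    have hresp : ∀ e₁ e₂ : E,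
        (MulAction.orbitRel (FundamentalGroup X x₀) E).r e₁ e₂ →
        Quotient.mk (pathSetoid C) (Ψ₀ e₁) = Quotient.mk (pathSetoid C) (Ψ₀ e₂) := by
      intro e₁ e₂ h
      exact Quotient.sound ((part1 e₁ e₂).mpr h)
    set F : Quotient (MulAction.orbitRel (FundamentalGroup X x₀) E) → ZerothHomotopy C :=
      Quotient.lift (fun e => Quotient.mk (pathSetoid C) (Ψ₀ e)) hresp with hF
    have hbij : Function.Bijective F := by
      constructor
      · intro q₁ q₂ h
        induction q₁ using Quotient.ind
        induction q₂ using Quotient.ind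
        exact Quotient.sound ((part1 _ _).mp (Quotient.exact h))
      · intro q
        induction q using Quotient.ind with
        | _ c =>
          obtain ⟨e, he⟩ := hsurjC c
          exact ⟨Quotient.mk _ e, Quotient.sound he⟩
    exact ⟨Equiv.ofBijective F hbij, fun e => rfl⟩
  · -- Part 3
    intro e
    set K := pathComponent (Ψ₀ e) with hK
    have hsurK : ∀ x : X, ∃ c, c ∈ K ∧ φ c = x := by
      intro x
      obtain ⟨p⟩ : Joined x₀ x := PathConnectedSpace.joined x₀ x
      obtain ⟨g, hg0, hgl⟩ := hφ.exists_lift_cm p.toContinuousMap (Ψ₀ e)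
        (by rw [hfib]; simp)
      exact ⟨g 1, ⟨⟨g, hg0.symm ▸ rfl, rfl⟩⟩, by rw [hgl 1]; simp⟩
    refine ⟨hφ.restrict_pathComponent (Ψ₀ e) hsurK, ?_, ?_⟩
    · intro x
      obtain ⟨c, hcK, hcφ⟩ := hsurK x
      exact ⟨⟨c, hcK⟩, hcφ⟩
    · intro x
      -- equivalences
      have E1 : ↥((K.restrict φ) ⁻¹' {x}) ≃ {c : {c : C // φ c = x} // (c : C) ∈ K} :=
        { toFun := fun c => ⟨⟨c.1.1, c.2⟩, c.1.2⟩
          invFun := fun d => ⟨⟨d.1.1, d.2⟩, d.1.2⟩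
          left_inv := fun c => rfl
          right_inv := fun d => rfl }
      obtain ⟨p⟩ : Joined x₀ x := PathConnectedSpace.joined x₀ x
      obtain ⟨f, ⟨finj, fsurj⟩, fjoin⟩ := hφ.fiber_transport (φ := φ) p
      have memf : ∀ c : {c : C // φ c = x₀}, (c : C) ∈ K → ((f c : C) ∈ K) :=
        fun c hc => Joined.trans hc (fjoin c)
      have memf' : ∀ c : {c : C // φ c = x₀}, ((f c : C) ∈ K) → (c : C) ∈ K :=
        fun c hc => Joined.trans hc (fjoin c).symm
      set F' : {c : {c : C // φ c = x₀} // (c : C) ∈ K} →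
          {c : {c : C // φ c = x} // (c : C) ∈ K} :=
        fun c => ⟨f c.1, memf c.1 c.2⟩ with hF'
      have hF'bij : Function.Bijective F' := by
        constructor
        · intro c₁ c₂ h
          exact Subtype.ext (finj (congrArg Subtype.val h))
        · intro d
          obtain ⟨c, hc⟩ := fsurj d.1
          exact ⟨⟨c, memf' c (hc.symm ▸ d.2)⟩, Subtype.ext hc⟩
      set G : ↥(MulAction.orbit (FundamentalGroup X x₀) e) →
          {c : {c : C // φ c = x₀} // (c : C) ∈ K} :=
        fun o => ⟨⟨Ψ₀ o.1, hfib o.1⟩, ((part1 o.1 e).mpr o.2).symm⟩ with hG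
      have hGbij : Function.Bijective G := by
        constructor
        · intro o₁ o₂ h
          have h2 : Ψ₀ o₁.1 = Ψ₀ o₂.1 :=
            congrArg (fun d : {c : {c : C // φ c = x₀} // (c : C) ∈ K} => d.1.1) h
          exact Subtype.ext (hinj h2)
        · intro d
          obtain ⟨e', he'⟩ := hsurj d.1.1 d.1.2
          have he'K : e' ∈ MulAction.orbit (FundamentalGroup X x₀) e :=
            (part1 e' e).mp (by rw [he']; exact d.2.symm)
          exact ⟨⟨e', he'K⟩, Subtype.ext (Subtype.ext he')⟩
      calc Nat.card ↥((K.restrict φ) ⁻¹' {x})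
          = Nat.card {c : {c : C // φ c = x} // (c : C) ∈ K} := Nat.card_congr E1
        _ = Nat.card {c : {c : C // φ c = x₀} // (c : C) ∈ K} :=
            (Nat.card_congr (Equiv.ofBijective F' hF'bij)).symm
        _ = Nat.card ↥(MulAction.orbit (FundamentalGroup X x₀) e) :=
            (Nat.card_congr (Equiv.ofBijective G hGbij)).symm
end
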